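/- Let M be a partial group and f, g ∈ M. If η(f) = η(g) in the enveloping presented group G₀(M), then there exists a nonempty word w ∈ List M with w ⇝* [f] and w ⇝* [g]. -/

import Mathlib

/-- A partial group in Chermak's sense: a nonempty set `M` with a domain `D` of words
containing all words of length at most `1`, a product `Π` (here `pi`, given as a total
function whose axioms only concern words in `D`), and an involution `inv`. -/
structure PartialGroup (M : Type u) where
  /-- The underlying set is nonempty. -/
  nonempty : Nonempty M
  /-- The set of words on which the product is defined. -/
  D : Set (List M)
  /-- The product `Π : D → M` (extended arbitrarily to all words). -/
  pi : List M → M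
  /-- The inversion `x ↦ x⁻¹`. -/
  inv : M → M
  /-- `D` contains all words of length at most `1`. -/
  mem_D_of_length_le_one : ∀ w : List M, w.length ≤ 1 → w ∈ D
  /-- (i) `Π [f] = f`. -/
  pi_single : ∀ f : M, pi [f] = f
  /-- (ii) if `u ++ v ∈ D` then `u ∈ D`. -/
  mem_D_of_append_left : ∀ u v : List M, u ++ v ∈ D → u ∈ D
  /-- (ii) if `u ++ v ∈ D` then `v ∈ D`. -/
  mem_D_of_append_right : ∀ u v : List M, u ++ v ∈ D → v ∈ D
  /-- (iii) if `u ++ v ++ w ∈ D` then `u ++ [Π v] ++ w ∈ D`. -/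
  mem_D_contract : ∀ u v w : List M, u ++ v ++ w ∈ D → u ++ [pi v] ++ w ∈ D
  /-- (iii) if `u ++ v ++ w ∈ D` then `Π (u ++ v ++ w) = Π (u ++ [Π v] ++ w)`. -/
  pi_contract : ∀ u v w : List M, u ++ v ++ w ∈ D → pi (u ++ v ++ w) = pi (u ++ [pi v] ++ w)
  /-- `inv` is an involution. -/
  inv_inv : ∀ x : M, inv (inv x) = x
  /-- (iv) if `w ∈ D` then `w⁻¹ ++ w ∈ D`, where `w⁻¹` is the entrywise-inverted
  reverse of `w`. -/
  mem_D_inv_append : ∀ w ∈ D, (w.reverse.map inv) ++ w ∈ D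
  /-- (iv) if `w ∈ D` then `Π (w⁻¹ ++ w) = 1 = Π []`. -/
  pi_inv_append : ∀ w ∈ D, pi ((w.reverse.map inv) ++ w) = pi []

/-- The formal inverse of a word: reverse it and invert each entry. -/
def PartialGroup.wInv {M : Type u} (P : PartialGroup M) (w : List M) : List M :=
  w.reverse.map P.inv

/-- The single-contraction relation `⇝` on words in a partial group:
`u ++ [a, b] ++ v ⇝ u ++ [Π [a, b]] ++ v` whenever `[a, b] ∈ D`. -/
def PartialGroup.Contract {M : Type u} (P : PartialGroup M) (x y : List M) : Prop :=
  ∃ (u v : List M) (a b : M), [a, b] ∈ P.D ∧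
    x = u ++ [a, b] ++ v ∧ y = u ++ [P.pi [a, b]] ++ v

/-- The reflexive–transitive closure `⇝*` of the single-contraction relation. -/
def PartialGroup.ContractStar {M : Type u} (P : PartialGroup M) : List M → List M → Prop :=
  Relation.ReflTransGen P.Contract

/-- The relators `a · b · (Π [a, b])⁻¹` for `[a, b] ∈ D` in the free group on `M`,
presenting the enveloping group `G₀(M)`. -/
def PartialGroup.relators {M : Type u} (P : PartialGroup M) : Set (FreeGroup M) :=
  { r | ∃ a b : M, [a, b] ∈ P.D ∧
      r = FreeGroup.of a * FreeGroup.of b * (FreeGroup.of (P.pi [a, b]))⁻¹ }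

/-- The enveloping presented group `G₀(M)` of a partial group. -/
def PartialGroup.envGroup {M : Type u} (P : PartialGroup M) : Type u :=
  PresentedGroup P.relators

instance {M : Type u} (P : PartialGroup M) : Group P.envGroup :=
  inferInstanceAs (Group (PresentedGroup P.relators))

/-- The canonical map `η : M → G₀(M)`. -/
def PartialGroup.eta {M : Type u} (P : PartialGroup M) : M → P.envGroup :=
  PresentedGroup.of

namespace PartialGroup
variable {M : Type u} (P : PartialGroup M)

lemma contract_pair {a b : M} (h : [a, b] ∈ P.D) (u v : List M) :
    P.Contract (u ++ [a, b] ++ v) (u ++ [P.pi [a, b]] ++ v) :=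
  ⟨u, v, a, b, h, rfl, rfl⟩

lemma contract_pair' {a b c : M} (h : [a, b] ∈ P.D) (hc : P.pi [a, b] = c)
    (u v : List M) : P.Contract (u ++ [a, b] ++ v) (u ++ [c] ++ v) := by
  subst hc; exact P.contract_pair h u v

lemma contract_ctx {x y : List M} (u v : List M) (h : P.Contract x y) :
    P.Contract (u ++ x ++ v) (u ++ y ++ v) := by
  obtain ⟨u', v', a, b, hD, rfl, rfl⟩ := h
  exact ⟨u ++ u', v' ++ v, a, b, hD, by simp, by simp⟩

lemma cstar_ctx {x y : List M} (u v : List M) (h : P.ContractStar x y) :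
    P.ContractStar (u ++ x ++ v) (u ++ y ++ v) :=
  Relation.ReflTransGen.lift (fun z => u ++ z ++ v)
    (fun _ _ hab => P.contract_ctx u v hab) _ _ h

lemma cstar_left (u : List M) {x y : List M} (h : P.ContractStar x y) :
    P.ContractStar (u ++ x) (u ++ y) := by simpa using P.cstar_ctx u [] h

lemma cstar_right (v : List M) {x y : List M} (h : P.ContractStar x y) :
    P.ContractStar (x ++ v) (y ++ v) := by simpa using P.cstar_ctx [] v h

lemma mem_D_single (x : M) : [x] ∈ P.D := P.mem_D_of_length_le_one [x] (by simp)

lemma mem_D_xe (x : M) : [x, P.pi []] ∈ P.D := by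
  simpa using P.mem_D_contract [x] [] [] (by simpa using P.mem_D_single x)

lemma pi_xe (x : M) : P.pi [x, P.pi []] = x := by
  have h := P.pi_contract [x] [] [] (by simpa using P.mem_D_single x)
  simpa [P.pi_single] using h.symm

lemma mem_D_ex (x : M) : [P.pi [], x] ∈ P.D := by
  simpa using P.mem_D_contract [] [] [x] (by simpa using P.mem_D_single x)

lemma pi_ex (x : M) : P.pi [P.pi [], x] = x := by
  have h := P.pi_contract [] [] [x] (by simpa using P.mem_D_single x)
  simpa [P.pi_single] using h.symm

lemma mem_D_invx (x : M) : [P.inv x, x] ∈ P.D := by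
  simpa using P.mem_D_inv_append [x] (P.mem_D_single x)

lemma pi_invx (x : M) : P.pi [P.inv x, x] = P.pi [] := by
  simpa using P.pi_inv_append [x] (P.mem_D_single x)

lemma mem_D_xinv (x : M) : [x, P.inv x] ∈ P.D := by
  have h := P.mem_D_invx (P.inv x); rwa [P.inv_inv] at h

lemma pi_xinv (x : M) : P.pi [x, P.inv x] = P.pi [] := by
  have h := P.pi_invx (P.inv x); rwa [P.inv_inv] at h

lemma step_e_cons {w : List M} (hw : w ≠ []) : P.ContractStar (P.pi [] :: w) w := by
  obtain ⟨x, t, rfl⟩ := List.exists_cons_of_ne_nil hw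
  exact Relation.ReflTransGen.single (P.contract_pair' (P.mem_D_ex x) (P.pi_ex x) [] t)

lemma step_e_concat {w : List M} (hw : w ≠ []) : P.ContractStar (w ++ [P.pi []]) w := by
  obtain ⟨t, x, rfl⟩ := (List.eq_nil_or_concat w).resolve_left hw
  have h := Relation.ReflTransGen.single (P.contract_pair' (P.mem_D_xe x) (P.pi_xe x) t [])
  simpa [PartialGroup.ContractStar] using h

lemma wInv_cons (a : M) (t : List M) : P.wInv (a :: t) = P.wInv t ++ [P.inv a] := by
  simp [wInv]

lemma wInv_wInv (w : List M) : P.wInv (P.wInv w) = w := by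
  simp [wInv, Function.comp_def, P.inv_inv]

lemma wInv_ne_nil {w : List M} (hw : w ≠ []) : P.wInv w ≠ [] := by
  simp [wInv, hw]

lemma cancel : ∀ w : List M, w ≠ [] → P.ContractStar (w ++ P.wInv w) [P.pi []] := by
  intro w
  induction w with
  | nil => intro h; exact absurd rfl h
  | cons a t ih =>
    intro _
    rw [P.wInv_cons]
    by_cases ht : t = []
    · subst ht
      exact Relation.ReflTransGen.single
        (P.contract_pair' (P.mem_D_xinv a) (P.pi_xinv a) [] [])
    · have h1 : P.ContractStar ([a] ++ (t ++ P.wInv t) ++ [P.inv a])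
          ([a] ++ [P.pi []] ++ [P.inv a]) := P.cstar_ctx [a] [P.inv a] (ih ht)
      have h2 : P.Contract ([a] ++ [P.pi [], P.inv a] ++ [])
          ([a] ++ [P.inv a] ++ []) :=
        P.contract_pair' (P.mem_D_ex (P.inv a)) (P.pi_ex (P.inv a)) [a] []
      have h3 : P.Contract ([] ++ [a, P.inv a] ++ []) ([] ++ [P.pi []] ++ []) :=
        P.contract_pair' (P.mem_D_xinv a) (P.pi_xinv a) [] []
      have e1 : (a :: t) ++ (P.wInv t ++ [P.inv a]) = [a] ++ (t ++ P.wInv t) ++ [P.inv a] := by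
        simp
      rw [e1]
      refine h1.trans ?_
      have h2' : P.Contract ([a] ++ [P.pi []] ++ [P.inv a]) [a, P.inv a] := by
        simpa using h2
      have h3' : P.Contract [a, P.inv a] [P.pi []] := by simpa using h3
      exact (Relation.ReflTransGen.single h2').trans (Relation.ReflTransGen.single h3')

lemma cancel' (w : List M) (hw : w ≠ []) :
    P.ContractStar (P.wInv w ++ w) [P.pi []] := by
  have h := P.cancel (P.wInv w) (P.wInv_ne_nil hw)
  rwa [P.wInv_wInv] at h

lemma cstar_ne_nil {w v : List M} (h : P.ContractStar w v) (hv : v ≠ []) : w ≠ [] := by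
  rcases Relation.ReflTransGen.cases_head h with rfl | ⟨c, hc, _⟩
  · exact hv
  · obtain ⟨u, v', a, b, _, rfl, _⟩ := hc
    simp

/-- The common-expansion relation on nonempty words. -/
def mrel (x y : {w : List M // w ≠ []}) : Prop :=
  ∃ w : List M, P.ContractStar w x.1 ∧ P.ContractStar w y.1

lemma mrel_equiv : Equivalence P.mrel where
  refl x := ⟨x.1, Relation.ReflTransGen.refl, Relation.ReflTransGen.refl⟩
  symm := fun ⟨w, h1, h2⟩ => ⟨w, h2, h1⟩
  trans := by
    rintro x y z ⟨w1, h1x, h1y⟩ ⟨w2, h2y, h2z⟩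
    refine ⟨w1 ++ (P.wInv y.1 ++ w2), ?_, ?_⟩
    · have a1 : P.ContractStar (w1 ++ (P.wInv y.1 ++ w2)) (w1 ++ (P.wInv y.1 ++ y.1)) :=
        P.cstar_left w1 (P.cstar_left (P.wInv y.1) h2y)
      have a2 : P.ContractStar (w1 ++ (P.wInv y.1 ++ y.1)) (w1 ++ [P.pi []]) :=
        P.cstar_left w1 (P.cancel' y.1 y.2)
      have a3 : P.ContractStar (w1 ++ [P.pi []]) (x.1 ++ [P.pi []]) :=
        P.cstar_right [P.pi []] h1x
      exact ((a1.trans a2).trans a3).trans (P.step_e_concat x.2)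
    · have hw2 : w2 ≠ [] := P.cstar_ne_nil h2z z.2
      have a1 : P.ContractStar (w1 ++ (P.wInv y.1 ++ w2)) (y.1 ++ (P.wInv y.1 ++ w2)) :=
        P.cstar_right (P.wInv y.1 ++ w2) h1y
      have a2 : P.ContractStar ((y.1 ++ P.wInv y.1) ++ w2) ([P.pi []] ++ w2) :=
        P.cstar_right w2 (P.cancel y.1 y.2)
      have a2' : P.ContractStar (y.1 ++ (P.wInv y.1 ++ w2)) (P.pi [] :: w2) := by
        simpa [List.append_assoc] using a2
      exact ((a1.trans a2').trans (P.step_e_cons hw2)).trans h2z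

/-- Quotient of nonempty words by common expansion. -/
def consQ (m : M) : Quot P.mrel → Quot P.mrel :=
  Quot.map (fun x => (⟨m :: x.1, List.cons_ne_nil _ _⟩ : {w : List M // w ≠ []}))
    (by rintro x y ⟨w, h1, h2⟩
        exact ⟨m :: w, P.cstar_left [m] h1, P.cstar_left [m] h2⟩)

lemma consQ_mk (m : M) (x : {w : List M // w ≠ []}) :
    P.consQ m (Quot.mk P.mrel x) = Quot.mk P.mrel ⟨m :: x.1, List.cons_ne_nil _ _⟩ := rfl

lemma consQ_cancel (m m' : M) (hD : [m', m] ∈ P.D) (hpi : P.pi [m', m] = P.pi [])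
    (q : Quot P.mrel) : P.consQ m' (P.consQ m q) = q := by
  induction q using Quot.ind with | _ x => ?_
  have h1 : P.Contract ([] ++ [m', m] ++ x.1) ([] ++ [P.pi []] ++ x.1) :=
    P.contract_pair' hD hpi [] x.1
  have hm : P.mrel ⟨m' :: m :: x.1, List.cons_ne_nil _ _⟩ x :=
    ⟨m' :: m :: x.1, Relation.ReflTransGen.refl,
      (Relation.ReflTransGen.single h1).trans (P.step_e_cons x.2)⟩
  exact Quot.sound hm

def permQ (m : M) : Equiv.Perm (Quot P.mrel) where
  toFun := P.consQ m
  invFun := P.consQ (P.inv m)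
  left_inv q := P.consQ_cancel m (P.inv m) (P.mem_D_invx m) (P.pi_invx m) q
  right_inv q := by
    have h := P.consQ_cancel (P.inv m) m (P.mem_D_xinv m) (P.pi_xinv m) q
    simpa using h

lemma relators_lift (r : FreeGroup M)
    (hr : r ∈ { r | ∃ a b : M, [a, b] ∈ P.D ∧
      r = FreeGroup.of a * FreeGroup.of b * (FreeGroup.of (P.pi [a, b]))⁻¹ }) :
    FreeGroup.lift (fun m => P.permQ m) r = 1 := by
  obtain ⟨a, b, hD, rfl⟩ := hr
  rw [map_mul, map_mul, map_inv, FreeGroup.lift_apply_of, FreeGroup.lift_apply_of, FreeGroup.lift_apply_of]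
  ext q
  induction q using Quot.ind with | _ x => ?_
  simp only [Equiv.Perm.mul_apply, Equiv.Perm.inv_def, Equiv.Perm.one_apply]
  have h1 : P.Contract ([] ++ [a, b] ++ (P.inv (P.pi [a, b]) :: x.1))
      ([] ++ [P.pi [a, b]] ++ (P.inv (P.pi [a, b]) :: x.1)) :=
    P.contract_pair hD [] _
  have h2 : P.Contract ([] ++ [P.pi [a, b], P.inv (P.pi [a, b])] ++ x.1)
      ([] ++ [P.pi []] ++ x.1) :=
    P.contract_pair' (P.mem_D_xinv _) (P.pi_xinv _) [] x.1
  have hm : P.mrel ⟨a :: b :: P.inv (P.pi [a, b]) :: x.1, List.cons_ne_nil _ _⟩ x :=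
    ⟨a :: b :: P.inv (P.pi [a, b]) :: x.1, Relation.ReflTransGen.refl,
      (Relation.ReflTransGen.single h1).trans
        ((Relation.ReflTransGen.single h2).trans (P.step_e_cons x.2))⟩
  exact Quot.sound hm

end PartialGroup

/-- If `η f = η g` in the enveloping presented group `G₀(M)`, then there is a nonempty
word `w` with `w ⇝* [f]` and `w ⇝* [g]`. -/
theorem exists_mountain_of_eta_eq {M : Type u} (P : PartialGroup M) (f g : M)
    (h : P.eta f = P.eta g) :
    ∃ w : List M, w ≠ [] ∧ P.ContractStar w [f] ∧ P.ContractStar w [g] := by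
  classical
  have hrel : ∀ r ∈ P.relators, FreeGroup.lift (fun m => P.permQ m) r = 1 := by
    intro r hr
    exact P.relators_lift r hr
  have hfg : P.permQ f = P.permQ g := by
    have h2 := congrArg (PresentedGroup.toGroup hrel) h
    have h2' : (PresentedGroup.toGroup hrel) (PresentedGroup.of f)
        = (PresentedGroup.toGroup hrel) (PresentedGroup.of g) := h2
    rwa [PresentedGroup.toGroup.of, PresentedGroup.toGroup.of] at h2'
  set x0 : {w : List M // w ≠ []} := ⟨[P.pi []], by simp⟩ with hx0
  have h3 : P.consQ f (Quot.mk P.mrel x0) = P.consQ g (Quot.mk P.mrel x0) := by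
    have h3' := congrArg (fun e : Equiv.Perm (Quot P.mrel) => e (Quot.mk P.mrel x0)) hfg
    exact h3'
  have h4 : Relation.EqvGen P.mrel ⟨f :: x0.1, List.cons_ne_nil _ _⟩
      ⟨g :: x0.1, List.cons_ne_nil _ _⟩ := Quot.eq.mp h3
  have h5 : P.mrel ⟨f :: x0.1, List.cons_ne_nil _ _⟩ ⟨g :: x0.1, List.cons_ne_nil _ _⟩ :=
    (Equivalence.eqvGen_iff P.mrel_equiv).mp h4
  obtain ⟨w, hwf, hwg⟩ := h5
  have hext : ∀ (m : M), P.ContractStar (m :: x0.1) [m] := by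
    intro m
    have := Relation.ReflTransGen.single (P.contract_pair' (P.mem_D_xe m) (P.pi_xe m) [] [])
    simpa [hx0, PartialGroup.ContractStar] using this
  refine ⟨w, P.cstar_ne_nil hwf (by simp), hwf.trans (hext f), hwg.trans (hext g)⟩
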